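/- Let H_Δ be an n-vertex 3-connected triangulated plane graph and λ a positive integer, and consider the drawing of H_Δ^λ in which every new edge (an edge of H_Δ^λ not in H_Δ) joining x, y with a shortest (x,y)-wbw-path e₁,…,e_ℓ (ℓ ≤ λ) is drawn through the ℓ−1 faces f₁,…,f_{ℓ−1} determined by consecutive edge pairs of this path, crossing e₂,…,e_{ℓ−1}. In this drawing, every old edge (an edge of H_Δ) is crossed by at most (λ−3)·2^{λ−2} + 1 new edges. -/

import Mathlib

/-!
Definitions for wall-by-wall distance, λ-flat graphs and ξ-nearly planar graphs,
following Grigoriev, Koutsonas and Thilikos, "Nearly Planar Graphs and λ-flat Graphs".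

A plane graph is modelled combinatorially as a simple graph equipped with a rotation
system (a cyclic order of the edges incident to each vertex) that is planar, i.e.
satisfies Euler's formula (with faces counted as orbits of the face-tracing successor
on darts, corrected for isolated vertices and the number of connected components).

A graph embedding in the sphere (where edges may cross, but only at points that are
not vertices) is modelled topologically by a `Drawing`: an injective placement of the
vertices on the unit sphere of `ℝ³` together with, for each edge, a simple arc joining
the images of its endpoints whose interior avoids all vertices.
-/

namespace WBW

/-- The set of edges of `G` incident to the vertex `v`. -/
def incidentSet {V : Type*} (G : SimpleGraph V) (v : V) : Set (Sym2 V) :=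
  {e | e ∈ G.edgeSet ∧ v ∈ e}

/-- A simple graph together with a rotation system: for every vertex `v`, a
permutation of `Sym2 V` which fixes every non-incident edge and is a single cycle on
the set of edges incident to `v` (the cyclic order `σ_v` of the drawing). -/
structure RotationSystem (V : Type*) where
  G : SimpleGraph V
  rot : V → Equiv.Perm (Sym2 V)
  rot_cycleOn : ∀ v, (rot v).IsCycleOn (incidentSet G v)
  rot_fixed : ∀ v, ∀ e ∉ incidentSet G v, rot v e = e

variable {V : Type*}

/-- The face-tracing successor on darts: the dart `(u,v)` is followed by the dart
leaving `v` along the edge succeeding `s(u,v)` in the cyclic order around `v`. -/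
noncomputable def RotationSystem.faceNext (R : RotationSystem V) (d : R.G.Dart) :
    R.G.Dart :=
  have hmem : d.edge ∈ incidentSet R.G d.toProd.2 :=
    ⟨d.edge_mem, by rcases d with ⟨⟨a, b⟩, h⟩; simp [SimpleGraph.Dart.edge]⟩
  have hmem' : R.rot d.toProd.2 d.edge ∈ incidentSet R.G d.toProd.2 :=
    (R.rot_cycleOn d.toProd.2).1.mapsTo hmem
  ⟨(d.toProd.2, Sym2.Mem.other hmem'.2), by
    have h := Sym2.other_spec hmem'.2
    have h2 : R.rot d.toProd.2 d.edge ∈ R.G.edgeSet := hmem'.1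
    rw [← h] at h2
    exact h2⟩

/-- The number of faces of a rotation system: the number of orbits of the
face-tracing successor on darts. -/
noncomputable def RotationSystem.numFaces (R : RotationSystem V) : ℕ :=
  Nat.card (Quot (fun a b : R.G.Dart => R.faceNext a = b))

/-- A rotation system is plane (it is an embedding of the graph in the sphere without
crossings) iff it satisfies Euler's formula, componentwise; isolated vertices are
accounted for separately, since they carry no dart. -/
def RotationSystem.IsPlane (R : RotationSystem V) : Prop :=
  Nat.card V + R.numFaces + Nat.card {v : V | ∀ w, ¬ R.G.Adj v w} =
    Nat.card R.G.edgeSet + 2 * Nat.card R.G.ConnectedComponent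

/-- Two edges are attached if they share a vertex `v` and appear consecutively in the
cyclic order `σ_v` or its inverse. -/
def Attached (R : RotationSystem V) (e e' : Sym2 V) : Prop :=
  ∃ v : V, e ∈ incidentSet R.G v ∧ e' ∈ incidentSet R.G v ∧
    (R.rot v e = e' ∨ R.rot v e' = e)

/-- A wall-by-wall walk: a nonempty sequence of distinct edges of `R.G` in which
every two consecutive edges are attached. -/
def IsWbwWalk (R : RotationSystem V) (L : List (Sym2 V)) : Prop :=
  L ≠ [] ∧ L.Nodup ∧ (∀ e ∈ L, e ∈ R.G.edgeSet) ∧ L.Chain' (Attached R)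

/-- An `(x,y)`-wall-by-wall walk: a wall-by-wall walk whose first edge is incident to
`x` and whose last edge is incident to `y`. -/
def IsWbwWalkFromTo (R : RotationSystem V) (x y : V) (L : List (Sym2 V)) : Prop :=
  IsWbwWalk R L ∧ (∃ e, L.head? = some e ∧ x ∈ e) ∧ (∃ e, L.getLast? = some e ∧ y ∈ e)

/-- The wall-by-wall distance between `x` and `y`: the least number of edges of an
`(x,y)`-wall-by-wall walk (`⊤` if there is no such walk). -/
noncomputable def wbwDist (R : RotationSystem V) (x y : V) : ℕ∞ :=
  sInf {n : ℕ∞ | ∃ L, IsWbwWalkFromTo R x y L ∧ (L.length : ℕ∞) = n}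

/-- The `λ`-power of a plane graph: keep all edges and make adjacent all pairs of
vertices at wall-by-wall distance at most `λ`. -/
def RotationSystem.power (R : RotationSystem V) (l : ℕ) : SimpleGraph V :=
  R.G ⊔ SimpleGraph.fromRel (fun x y => wbwDist R x y ≤ (l : ℕ∞))

/-- `H` is a subgraph of `G` via the injection `τ`. -/
def SubgraphVia {U V : Type*} (H : SimpleGraph U) (G : SimpleGraph V) (τ : U → V) :
    Prop :=
  Function.Injective τ ∧ ∀ x y, H.Adj x y → G.Adj (τ x) (τ y)

/-- A graph is `λ`-flat if it is a subgraph of the `λ`-power of some plane graph. -/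
def IsFlat (l : ℕ) {V : Type*} (G : SimpleGraph V) : Prop :=
  ∃ (W : Type) (_ : Finite W) (R : RotationSystem W) (τ : V → W),
    R.IsPlane ∧ SubgraphVia G (R.power l) τ

/-- The unit sphere in `ℝ³`. -/
def unitSphere : Set (EuclideanSpace ℝ (Fin 3)) := Metric.sphere 0 1

/-- A drawing (embedding) of a graph in the sphere: vertices are placed injectively,
every edge is drawn as a simple arc joining the images of its two endpoints, and the
interior of every arc avoids all vertex images (so edges may meet, away from their
endpoints, only at points that are not vertices). -/
structure Drawing {V : Type*} (G : SimpleGraph V) where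
  vmap : V → unitSphere
  vmap_inj : Function.Injective vmap
  arc : Sym2 V → C(Set.Icc (0 : ℝ) 1, unitSphere)
  arc_inj : ∀ e ∈ G.edgeSet, Function.Injective (arc e)
  arc_ends : ∀ e ∈ G.edgeSet,
    Sym2.map vmap e =
      s(arc e ⟨0, Set.mem_Icc.mpr (by norm_num)⟩, arc e ⟨1, Set.mem_Icc.mpr (by norm_num)⟩)
  interior_avoids : ∀ e ∈ G.edgeSet, ∀ t : Set.Icc (0 : ℝ) 1,
    (t : ℝ) ≠ 0 → (t : ℝ) ≠ 1 → arc e t ∉ Set.range vmap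

/-- The crossings of the edge `e` in a drawing: pairs consisting of another edge `e'`
and a point, not a vertex, lying on the arcs of both `e` and `e'`. -/
def crossingSet {V : Type*} {G : SimpleGraph V} (D : Drawing G) (e : Sym2 V) :
    Set (Sym2 V × unitSphere) :=
  {q | q.1 ∈ G.edgeSet ∧ q.1 ≠ e ∧ q.2 ∈ Set.range (D.arc e) ∧
    q.2 ∈ Set.range (D.arc q.1) ∧ q.2 ∉ Set.range D.vmap}

/-- A graph is `ξ`-nearly planar if it has a drawing in the sphere in which every
edge is crossed at most `ξ` times. -/
def IsNearlyPlanar (x : ℕ) {V : Type*} (G : SimpleGraph V) : Prop :=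
  ∃ D : Drawing G, ∀ e ∈ G.edgeSet,
    (crossingSet D e).Finite ∧ (crossingSet D e).ncard ≤ x

/-- `λ(G)`: the least `λ` for which `G` is `λ`-flat. -/
noncomputable def flatNum {V : Type*} (G : SimpleGraph V) : ℕ :=
  sInf {l | IsFlat l G}

/-- `ξ(G)`: the least `ξ` for which `G` is `ξ`-nearly planar. -/
noncomputable def nearNum {V : Type*} (G : SimpleGraph V) : ℕ :=
  sInf {x | IsNearlyPlanar x G}

/-- A graph is 3-connected if it has more than 3 vertices and removing any at most 2
vertices leaves it connected. -/
def ThreeConnected {V : Type*} (G : SimpleGraph V) : Prop :=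
  3 < Nat.card V ∧ ∀ s : Set V, s.ncard ≤ 2 → (G.induce sᶜ).Connected

/-- A plane graph is triangulated if every face is bounded by a triangle, i.e. every
orbit of the face-tracing successor has length exactly 3. -/
def RotationSystem.Triangulated (R : RotationSystem V) : Prop :=
  ∀ d : R.G.Dart, R.faceNext (R.faceNext (R.faceNext d)) = d ∧ R.faceNext d ≠ d

/-- `H` is a topological minor of `G`: some subdivision of `H` is a subgraph of `G`,
equivalently the branch vertices embed injectively into `G` and the edges of `H` are
realized by internally disjoint paths of `G` avoiding the branch vertices. -/
def IsTopMinor {U V : Type*} (H : SimpleGraph U) (G : SimpleGraph V) : Prop :=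
  ∃ τ : U → V, Function.Injective τ ∧
    ∃ P : ∀ ⦃x y : U⦄, H.Adj x y → G.Walk (τ x) (τ y),
      (∀ ⦃x y : U⦄ (h : H.Adj x y), (P h).IsPath) ∧
      (∀ ⦃x y : U⦄ (h : H.Adj x y), ∀ v ∈ (P h).support,
        v ∈ Set.range τ → v = τ x ∨ v = τ y) ∧
      (∀ ⦃x y x' y' : U⦄ (h : H.Adj x y) (h' : H.Adj x' y'), s(x, y) ≠ s(x', y') →
        ∀ v, v ∈ (P h).support → v ∈ (P h').support → v ∈ Set.range τ)

/-- `H` is a contraction of `G`: `H` is obtained from `G` by contracting edges,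
equivalently there is a surjection `V(G) → V(H)` with connected fibres such that the
edges of `H` are exactly the pairs of distinct fibres joined by an edge of `G`. -/
def IsContractionOf {U V : Type*} (H : SimpleGraph U) (G : SimpleGraph V) : Prop :=
  ∃ f : V → U, Function.Surjective f ∧
    (∀ u : U, (G.induce (f ⁻¹' {u})).Connected) ∧
    (∀ a b : U, H.Adj a b ↔ a ≠ b ∧ ∃ x y, G.Adj x y ∧ f x = a ∧ f y = b)

/-- The medial graph of a plane graph `G`: its vertices are the edges of `G`, two of
them being adjacent iff they are attached (this is the dual of the radial graph). -/
def medial (R : RotationSystem V) : SimpleGraph {e : Sym2 V // e ∈ R.G.edgeSet} :=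
  SimpleGraph.fromRel (fun e f => Attached R e.1 f.1)

/-- The `(n × n)`-grid graph. -/
def gridGraph (n : ℕ) : SimpleGraph (Fin n × Fin n) :=
  SimpleGraph.fromRel (fun a b =>
    (a.1 = b.1 ∧ (a.2 : ℕ) + 1 = (b.2 : ℕ)) ∨ (a.2 = b.2 ∧ (a.1 : ℕ) + 1 = (b.1 : ℕ)))

/-- The faces of a rotation system: orbits of the face-tracing successor on darts. -/
def RotationSystem.Face (R : RotationSystem V) : Type _ :=
  Quot (fun a b : R.G.Dart => R.faceNext a = b)

/-- The edge `e` lies on the boundary of the face `F`. -/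
def EdgeOnFace (R : RotationSystem V) (e : Sym2 V) (F : R.Face) : Prop :=
  ∃ d : R.G.Dart, Quot.mk _ d = F ∧ d.edge = e

/-- A wall-by-wall walk passes through the face `F` if two consecutive edges of the
walk both lie on the boundary of `F`. -/
def WalkThroughFace (R : RotationSystem V) (L : List (Sym2 V)) (F : R.Face) : Prop :=
  ∃ (l₁ : List (Sym2 V)) (e₁ e₂ : Sym2 V) (l₂ : List (Sym2 V)),
    L = l₁ ++ e₁ :: e₂ :: l₂ ∧ EdgeOnFace R e₁ F ∧ EdgeOnFace R e₂ F

end WBW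

namespace WBWAux
open WBW

variable {V : Type} {R : WBW.RotationSystem V}

/-- An oriented triangular face, recorded by its rotation relations. -/
def Tri (R : WBW.RotationSystem V) (u v w : V) : Prop :=
  R.G.Adj u v ∧ R.G.Adj v w ∧ R.G.Adj w u ∧
  R.rot v s(u, v) = s(v, w) ∧ R.rot w s(v, w) = s(w, u) ∧ R.rot u s(w, u) = s(u, v)

lemma tri_cyc {u v w : V} (h : Tri R u v w) : Tri R v w u :=
  ⟨h.2.1, h.2.2.1, h.1, h.2.2.2.2.1, h.2.2.2.2.2, h.2.2.2.1⟩

lemma faceNext_fst (d : R.G.Dart) : (R.faceNext d).toProd.1 = d.toProd.2 := rfl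

lemma faceNext_edge (d : R.G.Dart) :
    (R.faceNext d).edge = R.rot d.toProd.2 d.edge := by
  show s(d.toProd.2, _) = _
  exact Sym2.other_spec _

lemma dart_edge_eq (d : R.G.Dart) : d.edge = s(d.toProd.1, d.toProd.2) := by
  rcases d with ⟨⟨a, b⟩, h⟩; rfl

lemma tri_exists (htri : R.Triangulated) {u v : V} (h : R.G.Adj u v) :
    ∃ w : V, Tri R u v w := by
  set d : R.G.Dart := ⟨(u, v), h⟩ with hd
  set d1 := R.faceNext d with hd1
  set d2 := R.faceNext d1 with hd2
  have h1fst : d1.toProd.1 = v := faceNext_fst d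
  have h2fst : d2.toProd.1 = d1.toProd.2 := faceNext_fst d1
  have h3 : R.faceNext d2 = d := (htri d).1
  have h3fst : d2.toProd.2 = u := by
    have : (R.faceNext d2).toProd.1 = d2.toProd.2 := faceNext_fst d2
    rw [h3] at this; exact this.symm
  refine ⟨d1.toProd.2, h, ?_, ?_, ?_, ?_, ?_⟩
  · have := d1.adj; rwa [h1fst] at this
  · have := d2.adj; rwa [h2fst, h3fst] at this
  · have e1 : d1.edge = R.rot v d.edge := by rw [hd1, faceNext_edge]
    have : d1.edge = s(v, d1.toProd.2) := by rw [dart_edge_eq, h1fst]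
    rw [this] at e1; exact e1.symm
  · have e2 : d2.edge = R.rot d1.toProd.2 d1.edge := by rw [hd2, faceNext_edge]
    have h21 : d2.edge = s(d1.toProd.2, u) := by rw [dart_edge_eq, h2fst, h3fst]
    have h11 : d1.edge = s(v, d1.toProd.2) := by rw [dart_edge_eq, h1fst]
    rw [h21, h11] at e2; exact e2.symm
  · have e3 : (R.faceNext d2).edge = R.rot d2.toProd.2 d2.edge := faceNext_edge d2
    have h21 : d2.edge = s(d1.toProd.2, u) := by rw [dart_edge_eq, h2fst, h3fst]
    rw [h3, h21, h3fst] at e3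
    have : d.edge = s(u, v) := rfl
    rw [this] at e3; exact e3.symm

lemma tri_unique {u v w w' : V} (h : Tri R u v w) (h' : Tri R u v w') : w = w' := by
  have heq : s(v, w) = s(v, w') := h.2.2.2.1.symm.trans h'.2.2.2.1
  rcases Sym2.eq_iff.1 heq with ⟨_, hw⟩ | ⟨hv, hw⟩
  · exact hw
  · exact absurd hv h'.2.1.ne

open Classical in
noncomputable def apx (R : WBW.RotationSystem V) (u v : V) : V :=
  if h : ∃ w, Tri R u v w then h.choose else u

lemma apx_eq {u v w : V} (h : Tri R u v w) : apx R u v = w := by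
  rw [apx, dif_pos ⟨w, h⟩]
  exact tri_unique (⟨w, h⟩ : ∃ w, Tri R u v w).choose_spec h

lemma tri_apx (htri : R.Triangulated) {u v : V} (h : R.G.Adj u v) :
    Tri R u v (apx R u v) := by
  obtain ⟨w, hw⟩ := tri_exists htri h
  rw [apx_eq hw]; exact hw

end WBWAux

namespace WBWAux
open WBW

variable {V : Type} {R : WBW.RotationSystem V}

lemma apx_ne [Finite V] (htri : R.Triangulated) (h3 : WBW.ThreeConnected R.G)
    {u v : V} (h : R.G.Adj u v) : apx R u v ≠ apx R v u := by
  intro heq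
  have T1 : Tri R u v (apx R u v) := tri_apx htri h
  have T2' : Tri R v u (apx R v u) := tri_apx htri h.symm
  set w := apx R u v with hw
  have T2 : Tri R v u w := by rw [heq]; exact T2'
  have r1 : R.rot v s(u, v) = s(v, w) := T1.2.2.2.1
  have r2 : R.rot v s(v, w) = s(u, v) := by
    have := T2.2.2.2.2.2
    rwa [Sym2.eq_swap (a := w) (b := v), Sym2.eq_swap (a := v) (b := u)] at this
  -- every edge incident to v is s(u,v) or s(v,w)
  have key : ∀ g ∈ WBW.incidentSet R.G v, g = s(u, v) ∨ g = s(v, w) := by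
    intro g hg
    have hmem : s(u, v) ∈ WBW.incidentSet R.G v :=
      ⟨(SimpleGraph.mem_edgeSet R.G).2 h, by simp⟩
    obtain ⟨n, hn⟩ := (R.rot_cycleOn v).2 hmem hg
    suffices hsuf : ∀ i : ℤ,
        (((R.rot v) ^ i) s(u, v) = s(u, v) ∨ ((R.rot v) ^ i) s(u, v) = s(v, w)) ∧
        (((R.rot v) ^ i) s(v, w) = s(u, v) ∨ ((R.rot v) ^ i) s(v, w) = s(v, w)) by
      rw [← hn]; exact (hsuf n).1
    intro i
    induction i using Int.induction_on with
    | zero => simp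
    | succ k ih =>
        constructor
        · rw [zpow_add_one, Equiv.Perm.mul_apply, r1]
          exact ih.2
        · rw [zpow_add_one, Equiv.Perm.mul_apply, r2]
          exact ih.1
    | pred k ih =>
        have hi1 : (R.rot v)⁻¹ s(u, v) = s(v, w) := by
          rw [← r2]; exact (Equiv.symm_apply_apply (R.rot v) _)
        have hi2 : (R.rot v)⁻¹ s(v, w) = s(u, v) := by
          rw [← r1]; exact (Equiv.symm_apply_apply (R.rot v) _)
        constructor
        · rw [zpow_sub_one, Equiv.Perm.mul_apply, hi1]
          exact ih.2
        · rw [zpow_sub_one, Equiv.Perm.mul_apply, hi2]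
          exact ih.1
  have hnbr : ∀ t : V, R.G.Adj v t → t = u ∨ t = w := by
    intro t ht
    have : s(v, t) ∈ WBW.incidentSet R.G v :=
      ⟨(SimpleGraph.mem_edgeSet R.G).2 ht, by simp⟩
    rcases key _ this with hh | hh
    · rcases Sym2.eq_iff.1 hh with ⟨hv1, _⟩ | ⟨_, ht2⟩
      · exact absurd hv1 h.ne'
      · exact Or.inl ht2
    · rcases Sym2.eq_iff.1 hh with ⟨_, ht2⟩ | ⟨hv1, _⟩
      · exact Or.inr ht2
      · exact absurd hv1 T1.2.1.ne
  -- find a fourth vertex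
  have hvu : v ≠ u := h.ne'
  have hvw : v ≠ w := T1.2.1.ne
  obtain ⟨z, hz⟩ : ∃ z : V, z ∉ ({u, v, w} : Set V) := by
    by_contra hcon
    push_neg at hcon
    have hle : Nat.card V ≤ 3 := by
      calc Nat.card V = (Set.univ : Set V).ncard := (Set.ncard_univ V).symm
        _ ≤ ({u, v, w} : Set V).ncard :=
            Set.ncard_le_ncard (fun z _ => hcon z) (Set.toFinite _)
        _ ≤ 3 := by
            calc ({u, v, w} : Set V).ncard ≤ ({v, w} : Set V).ncard + 1 :=
                Set.ncard_insert_le _ _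
              _ ≤ (({w} : Set V).ncard + 1) + 1 := by
                  exact Nat.add_le_add_right (Set.ncard_insert_le _ _) 1
              _ = 3 := by rw [Set.ncard_singleton]
    exact absurd h3.1 (by omega)
  have hconn := h3.2 {u, w} (by
    calc ({u, w} : Set V).ncard ≤ ({w} : Set V).ncard + 1 := Set.ncard_insert_le _ _
      _ = 2 := by rw [Set.ncard_singleton])
  have hvmem : v ∈ ({u, w} : Set V)ᶜ := by
    simp only [Set.mem_compl_iff, Set.mem_insert_iff, Set.mem_singleton_iff]
    push_neg
    exact ⟨hvu, hvw⟩
  have hzmem : z ∈ ({u, w} : Set V)ᶜ := by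
    simp only [Set.mem_compl_iff, Set.mem_insert_iff, Set.mem_singleton_iff]
    push_neg
    simp only [Set.mem_insert_iff, Set.mem_singleton_iff] at hz
    push_neg at hz
    exact ⟨hz.1, hz.2.2⟩
  have hvz : (⟨v, hvmem⟩ : ↥(({u, w} : Set V)ᶜ)) ≠ ⟨z, hzmem⟩ := by
    intro hcon
    apply hz
    simp only [Set.mem_insert_iff, Set.mem_singleton_iff]
    right; left
    exact (congrArg Subtype.val hcon).symm
  obtain ⟨p⟩ := hconn.preconnected ⟨v, hvmem⟩ ⟨z, hzmem⟩
  have hnotnil : ¬ p.Nil := SimpleGraph.Walk.not_nil_of_ne hvz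
  cases p with
  | nil => exact absurd SimpleGraph.Walk.Nil.nil hnotnil
  | cons ha p' =>
      rename_i t
      have hadj : R.G.Adj v ↑t := by
        have := ha
        simp only [SimpleGraph.induce, SimpleGraph.comap_adj] at this
        exact this
      rcases hnbr ↑t hadj with h' | h'
      · exact t.2 (by simp [h'])
      · exact t.2 (by simp [h'])

end WBWAux

namespace WBWAux
open WBW

variable {V : Type} {R : WBW.RotationSystem V}

lemma attached_symm {e f : Sym2 V} (h : WBW.Attached R e f) : WBW.Attached R f e := by
  obtain ⟨v, h1, h2, h3⟩ := h
  exact ⟨v, h2, h1, h3.symm⟩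

lemma tri_attached_12 {u v w : V} (h : Tri R u v w) :
    WBW.Attached R s(u, v) s(v, w) :=
  ⟨v, ⟨(SimpleGraph.mem_edgeSet R.G).2 h.1, by simp⟩,
    ⟨(SimpleGraph.mem_edgeSet R.G).2 h.2.1, by simp⟩, Or.inl h.2.2.2.1⟩

lemma tri_attached_23 {u v w : V} (h : Tri R u v w) :
    WBW.Attached R s(v, w) s(w, u) := tri_attached_12 (tri_cyc h)

lemma attached_face (htri : R.Triangulated) {e f : Sym2 V}
    (h : WBW.Attached R e f) (hne : e ≠ f) :
    ∃ u v w, Tri R u v w ∧ e = s(u, v) ∧ (f = s(v, w) ∨ f = s(w, u)) := by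
  obtain ⟨v0, ⟨heE, hev⟩, ⟨hfE, hfv⟩, hor⟩ := h
  rcases hor with hr | hr
  · obtain ⟨t, het⟩ : ∃ t, e = s(t, v0) :=
      ⟨Sym2.Mem.other hev, by rw [Sym2.eq_swap]; exact (Sym2.other_spec hev).symm⟩
    have hadj : R.G.Adj t v0 := (SimpleGraph.mem_edgeSet R.G).1 (het ▸ heE)
    have T := tri_apx htri hadj
    refine ⟨t, v0, apx R t v0, T, het, Or.inl ?_⟩
    rw [← hr, het]
    exact T.2.2.2.1
  · obtain ⟨t, hft⟩ : ∃ t, f = s(t, v0) :=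
      ⟨Sym2.Mem.other hfv, by rw [Sym2.eq_swap]; exact (Sym2.other_spec hfv).symm⟩
    have hadj : R.G.Adj t v0 := (SimpleGraph.mem_edgeSet R.G).1 (hft ▸ hfE)
    have T := tri_apx htri hadj
    have he' : e = s(v0, apx R t v0) := by
      rw [← hr, hft]
      exact T.2.2.2.1
    exact ⟨v0, apx R t v0, t, tri_cyc T, he', Or.inr hft⟩

/-- Any edge attached to `s(α,β)` and different from it lies on one of its two faces. -/
lemma attached_to_edge (htri : R.Triangulated) {α β : V} (hadj : R.G.Adj α β)
    {g : Sym2 V} (h : WBW.Attached R s(α, β) g) (hne : g ≠ s(α, β)) :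
    (g = s(β, apx R α β) ∨ g = s(apx R α β, α)) ∨
    (g = s(α, apx R β α) ∨ g = s(apx R β α, β)) := by
  obtain ⟨u, v, w, T, he, hf⟩ := attached_face htri h (Ne.symm hne)
  rcases Sym2.eq_iff.1 he with ⟨h1, h2⟩ | ⟨h1, h2⟩
  · subst h1; subst h2
    rw [apx_eq T] at *
    exact Or.inl hf
  · subst h1; subst h2
    rw [apx_eq T] at *
    exact Or.inr hf

end WBWAux

namespace WBWAux
open WBW List

variable {V : Type} {R : WBW.RotationSystem V}

/-- Minimality extracted from the distance equality. -/
lemma length_min {x y : V} {L : List (Sym2 V)}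
    (hlen : (L.length : ℕ∞) = WBW.wbwDist R x y)
    {L' : List (Sym2 V)} (h' : WBW.IsWbwWalkFromTo R x y L') :
    L.length ≤ L'.length := by
  have h1 : WBW.wbwDist R x y ≤ (L'.length : ℕ∞) := sInf_le ⟨L', h', rfl⟩
  rw [← hlen] at h1
  exact_mod_cast h1

/-- In a shortest wall-by-wall walk, two edges two apart are never attached. -/
lemma not_attached_skip {x y : V} {L : List (Sym2 V)}
    (hv : WBW.IsWbwWalkFromTo R x y L)
    (hm : ∀ L', WBW.IsWbwWalkFromTo R x y L' → L.length ≤ L'.length)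
    {pre post : List (Sym2 V)} {a b c : Sym2 V}
    (hdec : L = pre ++ a :: b :: c :: post) :
    ¬ WBW.Attached R a c := by
  intro hat
  obtain ⟨⟨hne, hnd, hedges, hch⟩, hhead, hlast⟩ := hv
  have hsub : (pre ++ a :: c :: post) <+ L := by
    rw [hdec]
    refine Sublist.append_left ?_ pre
    exact (List.cons_sublist_cons.2 (List.sublist_cons_self b (c :: post)))
  have hch' : List.Chain' (WBW.Attached R) (pre ++ a :: c :: post) := by
    rw [hdec] at hch
    simp only [List.Chain'] at hch ⊢
    rw [List.isChain_append] at hch ⊢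
    obtain ⟨h1, h2, h3⟩ := hch
    refine ⟨h1, ?_, ?_⟩
    · rw [List.isChain_cons_cons]
      exact ⟨hat, (List.isChain_cons_cons.1 (List.isChain_cons_cons.1 h2).2).2⟩
    · intro p hp q hq
      exact h3 p hp q hq
  have hv' : WBW.IsWbwWalkFromTo R x y (pre ++ a :: c :: post) := by
    refine ⟨⟨by simp, hsub.nodup hnd, fun g hg => hedges g (hsub.subset hg), hch'⟩, ?_, ?_⟩
    · obtain ⟨g, hg, hxg⟩ := hhead
      refine ⟨g, ?_, hxg⟩
      rw [hdec] at hg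
      rw [List.head?_append] at hg ⊢
      cases hpre : pre.head? with
      | none => simpa [hpre] using hg
      | some gg => simpa [hpre] using hg
    · obtain ⟨g, hg, hyg⟩ := hlast
      refine ⟨g, ?_, hyg⟩
      rw [hdec] at hg
      rw [show pre ++ a :: b :: c :: post = (pre ++ [a, b]) ++ c :: post by simp] at hg
      rw [show pre ++ a :: c :: post = (pre ++ [a]) ++ c :: post by simp]
      rw [List.getLast?_append] at hg ⊢
      cases hcp : (c :: post).getLast? with
      | none => simp at hcp
      | some gg => simpa [hcp] using hg
  have := hm _ hv'
  rw [hdec] at this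
  simp at this

/-- If the endpoint lies on the second-to-last edge, the walk was not shortest. -/
lemma endpoint_not_mem_penult {x y : V} {L : List (Sym2 V)}
    (hv : WBW.IsWbwWalkFromTo R x y L)
    (hm : ∀ L', WBW.IsWbwWalkFromTo R x y L' → L.length ≤ L'.length)
    {pre : List (Sym2 V)} {b c : Sym2 V}
    (hdec : L = pre ++ [b, c]) : y ∉ b := by
  intro hyb
  obtain ⟨⟨hne, hnd, hedges, hch⟩, hhead, hlast⟩ := hv
  have hpref : (pre ++ [b]) <+: L := ⟨[c], by rw [hdec]; simp⟩
  have hv' : WBW.IsWbwWalkFromTo R x y (pre ++ [b]) := by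
    refine ⟨⟨by simp, hpref.sublist.nodup hnd,
      fun g hg => hedges g (hpref.sublist.subset hg), hch.prefix hpref⟩, ?_, ?_⟩
    · obtain ⟨g, hg, hxg⟩ := hhead
      refine ⟨g, ?_, hxg⟩
      rw [hdec] at hg
      rw [show pre ++ [b, c] = (pre ++ [b]) ++ [c] by simp] at hg
      rw [List.head?_append_of_ne_nil _ (by simp)] at hg
      exact hg
    · exact ⟨b, List.getLast?_concat, hyb⟩
  have := hm _ hv'
  rw [hdec] at this
  simp at this

/-- An interior element of a list gives a two-sided decomposition. -/
lemma mem_interior_decomp {L : List (Sym2 V)} {e : Sym2 V}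
    (h : e ∈ (L.drop 1).dropLast) :
    ∃ A B, L = A ++ e :: B ∧ A ≠ [] ∧ B ≠ [] := by
  cases L with
  | nil => simp at h
  | cons h0 L1 =>
      simp only [List.drop_succ_cons, List.drop_zero] at h
      have hL1 : L1 ≠ [] := by
        intro hcon; rw [hcon] at h; simp at h
      obtain ⟨M1, M2, hM⟩ := List.append_of_mem h
      have hrec : L1 = (M1 ++ e :: M2) ++ [L1.getLast hL1] := by
        conv_lhs => rw [← List.dropLast_append_getLast hL1]
        rw [hM]
      refine ⟨h0 :: M1, M2 ++ [L1.getLast hL1], ?_, by simp, by simp⟩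
      rw [show (h0 :: M1) ++ e :: (M2 ++ [L1.getLast hL1])
          = h0 :: ((M1 ++ e :: M2) ++ [L1.getLast hL1]) by simp]
      rw [← hrec]

end WBWAux

namespace WBWAux
open WBW List

variable {V : Type} {R : WBW.RotationSystem V}

noncomputable def stepSt (R : WBW.RotationSystem V) (p : V × V) : Bool → V × V
  | true => (apx R p.1 p.2, p.2)
  | false => (p.1, apx R p.1 p.2)

def edgeOf (p : V × V) : Sym2 V := s(p.1, p.2)

open Classical in
noncomputable def bitOf (R : WBW.RotationSystem V) (p : V × V) (c : Sym2 V) : Bool :=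
  if c = s(p.2, apx R p.1 p.2) then true else false

noncomputable def code (R : WBW.RotationSystem V) : V × V → List (Sym2 V) → List Bool
  | _, [] => []
  | p, c :: cs => bitOf R p c :: code R (stepSt R p (bitOf R p c)) cs

noncomputable def ydec (R : WBW.RotationSystem V) : V × V → List Bool → V
  | p, [] => apx R p.1 p.2
  | p, _bit :: bs => ydec R (stepSt R p _bit) bs

def Inv (R : WBW.RotationSystem V) (p : V × V) (cprev c : Sym2 V) : Prop :=
  R.G.Adj p.1 p.2 ∧ c = s(p.1, p.2) ∧
    (cprev = s(p.1, apx R p.2 p.1) ∨ cprev = s(apx R p.2 p.1, p.2))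

lemma bitOf_edge (htri : R.Triangulated) {p : V × V} (h : R.G.Adj p.1 p.2)
    (bit : Bool) : bitOf R p (edgeOf (stepSt R p bit)) = bit := by
  obtain ⟨a, b⟩ := p
  have T : Tri R a b (apx R a b) := tri_apx htri h
  cases bit with
  | true =>
      show bitOf R (a, b) s((apx R a b), b) = true
      rw [bitOf, if_pos (Sym2.eq_swap)]
  | false =>
      show bitOf R (a, b) s(a, (apx R a b)) = false
      rw [bitOf, if_neg]
      intro hcon
      rcases Sym2.eq_iff.1 hcon with ⟨h1, _⟩ | ⟨h1, h2⟩
      · exact h.ne h1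
      · exact T.2.2.1.ne h1.symm

lemma step_lemma [Finite V] (htri : R.Triangulated) (h3 : WBW.ThreeConnected R.G)
    {x y : V} {L : List (Sym2 V)}
    (hv : WBW.IsWbwWalkFromTo R x y L)
    (hm : ∀ L', WBW.IsWbwWalkFromTo R x y L' → L.length ≤ L'.length)
    {pre post : List (Sym2 V)} {cprev c cnext : Sym2 V}
    (hdec : L = pre ++ cprev :: c :: cnext :: post)
    {p : V × V} (hinv : Inv R p cprev c) :
    ∃ bit : Bool, cnext = edgeOf (stepSt R p bit) ∧ Inv R (stepSt R p bit) c cnext := by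
  obtain ⟨a, b⟩ := p
  obtain ⟨hab, hc, hprev⟩ := hinv
  have hinfix : [cprev, c, cnext] <:+: L := ⟨pre, post, by rw [hdec]; simp⟩
  have hnd3 : [cprev, c, cnext].Nodup := hinfix.sublist.nodup hv.1.2.1
  have hccn : c ≠ cnext := by simp at hnd3; tauto
  have hpcn : cprev ≠ cnext := by simp at hnd3; tauto
  have hat : WBW.Attached R c cnext := by
    have hch3 : List.Chain' (WBW.Attached R) [cprev, c, cnext] :=
      hv.1.2.2.2.infix hinfix
    exact (List.isChain_cons_cons.1 (List.isChain_cons_cons.1 hch3).2).1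
  rw [hc] at hat
  have hcls := attached_to_edge htri hab hat (by rw [← hc]; exact hccn.symm)
  have T : Tri R a b (apx R a b) := tri_apx htri hab
  rcases hcls with hnew | hold
  · rcases hnew with h1 | h1
    · refine ⟨true, ?_, ?_⟩
      · simp only [edgeOf, stepSt]
        rw [h1]; exact Sym2.eq_swap
      · have hapx : apx R b (apx R a b) = a := apx_eq (tri_cyc T)
        refine ⟨T.2.1.symm, ?_, Or.inr ?_⟩
        · simp only [stepSt]
          rw [h1]; exact Sym2.eq_swap
        · simp only [stepSt]
          rw [hapx]; exact hc
    · refine ⟨false, ?_, ?_⟩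
      · simp only [edgeOf, stepSt]
        rw [h1]; exact Sym2.eq_swap
      · have hapx : apx R (apx R a b) a = b := apx_eq (tri_cyc (tri_cyc T))
        refine ⟨T.2.2.1.symm, ?_, Or.inl ?_⟩
        · simp only [stepSt]
          rw [h1]; exact Sym2.eq_swap
        · simp only [stepSt]
          rw [hapx]; exact hc
  · -- both neighbours on the old face: contradiction with shortest
    exfalso
    have T' : Tri R b a (apx R b a) := tri_apx htri hab.symm
    have hattpair : WBW.Attached R s(a, apx R b a) s((apx R b a), b) :=
      tri_attached_23 T'
    have hskip := not_attached_skip hv hm hdec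
    rcases hprev with h1 | h1 <;> rcases hold with h2 | h2
    · exact hpcn (h1.trans h2.symm)
    · exact hskip (by rw [h1, h2]; exact hattpair)
    · exact hskip (by rw [h1, h2]; exact attached_symm hattpair)
    · exact hpcn (h1.trans h2.symm)

end WBWAux

namespace WBWAux
open WBW List

variable {V : Type} {R : WBW.RotationSystem V}

lemma code_cons (p : V × V) (c : Sym2 V) (cs : List (Sym2 V)) :
    code R p (c :: cs) = bitOf R p c :: code R (stepSt R p (bitOf R p c)) cs := rfl

lemma ydec_cons (p : V × V) (bit : Bool) (bs : List Bool) :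
    ydec R p (bit :: bs) = ydec R (stepSt R p bit) bs := rfl

/-- The second endpoint of a shortest walk is recovered from the bits (minus the
last one) along the side following the current edge. -/
lemma side_y [Finite V] (htri : R.Triangulated) (h3 : WBW.ThreeConnected R.G)
    {x y : V} {L : List (Sym2 V)}
    (hv : WBW.IsWbwWalkFromTo R x y L)
    (hm : ∀ L', WBW.IsWbwWalkFromTo R x y L' → L.length ≤ L'.length) :
    ∀ (B pre : List (Sym2 V)) (gA c : Sym2 V) (p : V × V),
      B ≠ [] → L = pre ++ gA :: c :: B → Inv R p gA c →
      y = ydec R p ((code R p B).dropLast) := by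
  intro B
  induction B with
  | nil => intro pre gA c p hBne _ _; exact absurd rfl hBne
  | cons c1 B' ih =>
      intro pre gA c p _ hdec hinv
      cases B' with
      | nil =>
          obtain ⟨bit, hc1, _⟩ := step_lemma htri h3 hv hm (post := []) hdec hinv
          obtain ⟨a, b⟩ := p
          have hab : R.G.Adj a b := hinv.1
          have T : Tri R a b (apx R a b) := tri_apx htri hab
          -- y is on the last edge c1
          have hyc1 : y ∈ c1 := by
            obtain ⟨g, hg, hyg⟩ := hv.2.2
            have : L.getLast? = some c1 := by
              rw [hdec, show pre ++ gA :: c :: [c1] = (pre ++ [gA, c]) ++ [c1] by simp]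
              exact List.getLast?_concat
            rw [this] at hg
            rw [Option.some_inj.1 hg]
            exact hyg
          -- y is not on c
          have hyc : y ∉ c := endpoint_not_mem_penult hv hm
            (pre := pre ++ [gA]) (b := c) (c := c1) (by rw [hdec]; simp)
          rw [hinv.2.1] at hyc
          have hya : y ≠ a := fun hcon => hyc (by rw [hcon]; simp)
          have hyb : y ≠ b := fun hcon => hyc (by rw [hcon]; simp)
          -- conclude y = apx a b
          have hyw : y = apx R a b := by
            simp only [edgeOf, stepSt] at hc1
            cases bit with
            | true =>
                rw [hc1, Sym2.mem_iff] at hyc1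
                tauto
            | false =>
                rw [hc1, Sym2.mem_iff] at hyc1
                tauto
          -- compute the right-hand side
          show y = ydec R (a, b) ((code R (a, b) [c1]).dropLast)
          rw [code_cons]
          simp only [code, List.dropLast_singleton]
          exact hyw
      | cons c2 B'' =>
          obtain ⟨bit, hc1, hinv'⟩ :=
            step_lemma htri h3 hv hm (post := c2 :: B'') hdec hinv
          have hrec := ih (pre ++ [gA]) c c1 (stepSt R p bit) (by simp)
            (by rw [hdec]; simp) hinv'
          have hbit : bitOf R p c1 = bit := by
            rw [hc1]; exact bitOf_edge htri hinv.1 bit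
          rw [code_cons, hbit]
          rw [List.dropLast_cons_of_ne_nil (by rw [code_cons]; simp)]
          rw [ydec_cons]
          exact hrec

end WBWAux

namespace WBWAux
open List

/-- Bool lists of length exactly `k`. -/
def lenFin (k : ℕ) : Finset (List Bool) :=
  Finset.image (fun f : Fin k → Bool => List.ofFn f) Finset.univ

lemma mem_lenFin {k : ℕ} {s : List Bool} : s ∈ lenFin k ↔ s.length = k := by
  constructor
  · intro h
    obtain ⟨f, _, rfl⟩ := Finset.mem_image.1 h
    simp
  · intro h
    subst h
    exact Finset.mem_image.2 ⟨fun i => s[i], Finset.mem_univ _, List.ofFn_getElem (xs := s)⟩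

lemma card_lenFin (k : ℕ) : (lenFin k).card = 2 ^ k := by
  rw [lenFin, Finset.card_image_of_injective _ List.ofFn_injective, Finset.card_univ]
  simp

/-- Bool lists of length at most `j`. -/
def TB (j : ℕ) : Finset (List Bool) := (Finset.range (j + 1)).biUnion lenFin

lemma mem_TB {j : ℕ} {s : List Bool} : s ∈ TB j ↔ s.length ≤ j := by
  simp only [TB, Finset.mem_biUnion, Finset.mem_range, mem_lenFin]
  constructor
  · rintro ⟨k, hk, rfl⟩; omega
  · intro h; exact ⟨s.length, by omega, rfl⟩

lemma sum_two_pow (n : ℕ) : ∑ k ∈ Finset.range n, 2 ^ k = 2 ^ n - 1 := by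
  induction n with
  | zero => simp
  | succ n ih =>
      rw [Finset.sum_range_succ, ih]
      have h1 : 1 ≤ 2 ^ n := Nat.one_le_two_pow
      have h2 : 2 ^ (n + 1) = 2 * 2 ^ n := by rw [pow_succ]; ring
      omega

lemma card_TB (j : ℕ) : (TB j).card = 2 ^ (j + 1) - 1 := by
  rw [TB, Finset.card_biUnion]
  · rw [Finset.sum_congr rfl (fun k _ => card_lenFin k)]
    exact sum_two_pow (j + 1)
  · intro k _ k' _ hkk'
    simp only [Finset.disjoint_left]
    intro s hs hs'
    rw [mem_lenFin] at hs hs'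
    exact hkk' (hs ▸ hs')

/-- Pairs of Bool lists of total length at most `m`. -/
def TT (m : ℕ) : Finset (List Bool × List Bool) :=
  (Finset.range (m + 1)).biUnion (fun k => (lenFin k) ×ˢ (TB (m - k)))

lemma mem_TT {m : ℕ} {p : List Bool × List Bool} :
    p ∈ TT m ↔ p.1.length + p.2.length ≤ m := by
  simp only [TT, Finset.mem_biUnion, Finset.mem_range, Finset.mem_product,
    mem_lenFin, mem_TB]
  constructor
  · rintro ⟨k, hk, rfl, h2⟩; omega
  · intro h; exact ⟨p.1.length, by omega, rfl, by omega⟩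

lemma card_TT (m : ℕ) : (TT m).card = m * 2 ^ (m + 1) + 1 := by
  rw [TT, Finset.card_biUnion]
  · have hterm : ∀ k ∈ Finset.range (m + 1),
        ((lenFin k) ×ˢ (TB (m - k))).card = 2 ^ k * (2 ^ (m - k + 1) - 1) := by
      intro k _
      rw [Finset.card_product, card_lenFin, card_TB]
    rw [Finset.sum_congr rfl hterm]
    have key : ∀ k ∈ Finset.range (m + 1),
        2 ^ k * (2 ^ (m - k + 1) - 1) + 2 ^ k = 2 ^ (m + 1) := by
      intro k hk
      rw [Finset.mem_range] at hk
      have h1 : 1 ≤ 2 ^ (m - k + 1) := Nat.one_le_two_pow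
      have h2 : 2 ^ k * 2 ^ (m - k + 1) = 2 ^ (m + 1) := by
        rw [← pow_add]
        congr 1
        omega
      have h3 : 2 ^ k * (2 ^ (m - k + 1) - 1) + 2 ^ k
          = 2 ^ k * (2 ^ (m - k + 1) - 1 + 1) := by ring
      rw [h3, Nat.sub_add_cancel h1, h2]
    have hsum : (∑ k ∈ Finset.range (m + 1), 2 ^ k * (2 ^ (m - k + 1) - 1))
        + (∑ k ∈ Finset.range (m + 1), (2 : ℕ) ^ k)
        = ∑ k ∈ Finset.range (m + 1), 2 ^ (m + 1) := by
      rw [← Finset.sum_add_distrib]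
      exact Finset.sum_congr rfl key
    rw [sum_two_pow, Finset.sum_const, Finset.card_range, smul_eq_mul] at hsum
    have h1 : 1 ≤ 2 ^ (m + 1) := Nat.one_le_two_pow
    have h2 : (m + 1) * 2 ^ (m + 1) = m * 2 ^ (m + 1) + 2 ^ (m + 1) := by ring
    omega
  · intro k _ k' _ hkk'
    simp only [Finset.disjoint_left]
    rintro ⟨s, t⟩ hs hs'
    rw [Finset.mem_product, mem_lenFin] at hs hs'
    exact hkk' (hs.1 ▸ hs'.1)

lemma code_length {V : Type} {R : WBW.RotationSystem V} (p : V × V)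
    (M : List (Sym2 V)) : (code R p M).length = M.length := by
  induction M generalizing p with
  | nil => rfl
  | cons c cs ih => rw [code_cons]; simp [ih]

end WBWAux

namespace WBWAux
open WBW List

variable {V : Type}

/-- A normalized witness tuple `(x, y, pre, gA, c1, B')` for a crossing edge `q`. -/
def GoodT (R : WBW.RotationSystem V) (P : V → V → List (Sym2 V)) (l : ℕ) (α β : V)
    (q : Sym2 V) (t : V × V × List (Sym2 V) × Sym2 V × Sym2 V × List (Sym2 V)) :
    Prop :=
  q = s(t.1, t.2.1) ∧ (R.power l).Adj t.1 t.2.1 ∧ ¬ R.G.Adj t.1 t.2.1 ∧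
    P t.1 t.2.1 = t.2.2.1 ++ t.2.2.2.1 :: s(α, β) :: t.2.2.2.2.1 :: t.2.2.2.2.2 ∧
    (t.2.2.2.2.1 = s(β, apx R α β) ∨ t.2.2.2.2.1 = s(apx R α β, α))

open Classical in
noncomputable def fenc (R : WBW.RotationSystem V) (P : V → V → List (Sym2 V))
    (l : ℕ) (α β : V) (q : Sym2 V) : List Bool × List Bool :=
  if h : ∃ t, GoodT R P l α β q t then
    ((code R (β, α) (h.choose.2.2.2.1 :: h.choose.2.2.1.reverse)).dropLast,
     (code R (α, β) (h.choose.2.2.2.2.1 :: h.choose.2.2.2.2.2)).dropLast)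
  else ([], [])

end WBWAux

namespace WBWAux
open WBW List

variable {V : Type}

lemma good_recover [Finite V] {R : WBW.RotationSystem V} (htri : R.Triangulated)
    (h3 : WBW.ThreeConnected R.G) {l : ℕ} {P : V → V → List (Sym2 V)}
    (hP : ∀ x y, (R.power l).Adj x y → ¬ R.G.Adj x y →
      WBW.IsWbwWalkFromTo R x y (P x y) ∧ ((P x y).length : ℕ∞) = WBW.wbwDist R x y)
    (hPsymm : ∀ x y, P y x = (P x y).reverse)
    {α β : V} (hαβ : R.G.Adj α β) {q : Sym2 V}
    {t : V × V × List (Sym2 V) × Sym2 V × Sym2 V × List (Sym2 V)}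
    (hG : GoodT R P l α β q t) :
    t.1 = ydec R (β, α) ((code R (β, α) (t.2.2.2.1 :: t.2.2.1.reverse)).dropLast) ∧
    t.2.1 = ydec R (α, β) ((code R (α, β) (t.2.2.2.2.1 :: t.2.2.2.2.2)).dropLast) ∧
    t.2.2.1.length + t.2.2.2.2.2.length ≤ l - 3 := by
  obtain ⟨x, y, pre, gA, c1, B'⟩ := t
  obtain ⟨hq, hadj, hnadj, hdecL, hc1f⟩ := hG
  simp only at hq hadj hnadj hdecL hc1f ⊢
  have hPv := (hP x y hadj hnadj).1
  have hPd := (hP x y hadj hnadj).2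
  have hm : ∀ L', WBW.IsWbwWalkFromTo R x y L' → (P x y).length ≤ L'.length :=
    fun L' h' => length_min hPd h'
  -- classify gA
  have hinf2 : [gA, s(α, β)] <:+: P x y := ⟨pre, c1 :: B', by rw [hdecL]; simp⟩
  have hgAat : WBW.Attached R s(α, β) gA :=
    attached_symm (List.isChain_pair.1 (hPv.1.2.2.2.infix hinf2))
  have hinf3 : [gA, s(α, β), c1] <:+: P x y := ⟨pre, B', by rw [hdecL]; simp⟩
  have hnd3 : [gA, s(α, β), c1].Nodup := hinf3.sublist.nodup hPv.1.2.1
  have hgAne : gA ≠ s(α, β) := by simp at hnd3; tauto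
  have hgAc1 : gA ≠ c1 := by simp at hnd3; tauto
  have hskip : ¬ WBW.Attached R gA c1 := not_attached_skip hPv hm hdecL
  have T0 : Tri R α β (apx R α β) := tri_apx htri hαβ
  have hgAface1 : gA = s(α, apx R β α) ∨ gA = s(apx R β α, β) := by
    rcases attached_to_edge htri hαβ hgAat hgAne with h0 | h1
    · exfalso
      have hpair := tri_attached_23 T0
      rcases h0 with hg | hg <;> rcases hc1f with hc | hc
      · exact hgAc1 (hg.trans hc.symm)
      · exact hskip (by rw [hg, hc]; exact hpair)
      · exact hskip (by rw [hg, hc]; exact attached_symm hpair)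
      · exact hgAc1 (hg.trans hc.symm)
    · exact h1
  -- y recovery
  have hinv : Inv R (α, β) gA s(α, β) := ⟨hαβ, rfl, hgAface1⟩
  have hy := side_y htri h3 hPv hm (c1 :: B') pre gA s(α, β) (α, β)
    (by simp) hdecL hinv
  -- x recovery
  have hadj' : (R.power l).Adj y x := hadj.symm
  have hnadj' : ¬ R.G.Adj y x := fun hcon => hnadj hcon.symm
  have hPv' := (hP y x hadj' hnadj').1
  have hPd' := (hP y x hadj' hnadj').2
  have hm' : ∀ L', WBW.IsWbwWalkFromTo R y x L' → (P y x).length ≤ L'.length :=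
    fun L' h' => length_min hPd' h'
  have hrevdec : P y x = B'.reverse ++ c1 :: s(β, α) :: (gA :: pre.reverse) := by
    rw [hPsymm x y, hdecL, show s(β, α) = s(α, β) from Sym2.eq_swap]
    simp
  have hinv' : Inv R (β, α) c1 s(β, α) := ⟨hαβ.symm, rfl, hc1f⟩
  have hx := side_y htri h3 hPv' hm' (gA :: pre.reverse) B'.reverse c1 s(β, α)
    (β, α) (by simp) hrevdec hinv'
  -- length bound
  have hlen : (P x y).length ≤ l := by
    have hpadj : (R.power l).Adj x y := hadj
    rw [WBW.RotationSystem.power] at hpadj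
    rcases (SimpleGraph.sup_adj _ _ _ _).1 hpadj with hGadj | hrel
    · exact absurd hGadj hnadj
    · rw [SimpleGraph.fromRel_adj] at hrel
      rcases hrel.2 with hr | hr
      · have : ((P x y).length : ℕ∞) ≤ (l : ℕ∞) := hPd ▸ hr
        exact_mod_cast this
      · have h1 : ((P y x).length : ℕ∞) ≤ (l : ℕ∞) := hPd' ▸ hr
        have h2 : (P y x).length = (P x y).length := by
          rw [hPsymm x y]; simp
        rw [h2] at h1
        exact_mod_cast h1
  have hlen2 : (P x y).length = pre.length + 3 + B'.length := by
    rw [hdecL]; simp; omega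
  exact ⟨hx, hy, by omega⟩

end WBWAux

namespace WBWAux
open WBW List

variable {V : Type}

lemma good_exists [Finite V] {R : WBW.RotationSystem V} (htri : R.Triangulated)
    {l : ℕ} {P : V → V → List (Sym2 V)}
    (hP : ∀ x y, (R.power l).Adj x y → ¬ R.G.Adj x y →
      WBW.IsWbwWalkFromTo R x y (P x y) ∧ ((P x y).length : ℕ∞) = WBW.wbwDist R x y)
    (hPsymm : ∀ x y, P y x = (P x y).reverse)
    {α β : V} (hαβ : R.G.Adj α β) {q : Sym2 V}
    (hq1 : q ∈ (R.power l).edgeSet) (hq2 : q ∉ R.G.edgeSet)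
    (hq3 : ∃ x y, q = s(x, y) ∧ s(α, β) ∈ ((P x y).drop 1).dropLast) :
    ∃ t, GoodT R P l α β q t := by
  obtain ⟨x, y, rfl, hmem⟩ := hq3
  have hadj : (R.power l).Adj x y := (SimpleGraph.mem_edgeSet _).1 hq1
  have hnadj : ¬ R.G.Adj x y := fun h => hq2 ((SimpleGraph.mem_edgeSet _).2 h)
  have hPv := (hP x y hadj hnadj).1
  have hPd := (hP x y hadj hnadj).2
  have hm : ∀ L', WBW.IsWbwWalkFromTo R x y L' → (P x y).length ≤ L'.length :=
    fun L' h' => length_min hPd h'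
  obtain ⟨A, B, hL, hA, hB⟩ := mem_interior_decomp hmem
  obtain ⟨pre0, gA, hA'⟩ : ∃ pre0 gA, A = pre0 ++ [gA] := by
    rcases List.eq_nil_or_concat A with h | ⟨L0, b0, h⟩
    · exact absurd h hA
    · exact ⟨L0, b0, by rw [h]; simp⟩
  cases B with
  | nil => exact absurd rfl hB
  | cons c1 B' =>
  have hdecL : P x y = pre0 ++ gA :: s(α, β) :: c1 :: B' := by
    rw [hL, hA']; simp
  -- classify c1 and gA
  have hinf2 : [gA, s(α, β)] <:+: P x y := ⟨pre0, c1 :: B', by rw [hdecL]; simp⟩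
  have hgAat : WBW.Attached R s(α, β) gA :=
    attached_symm (List.isChain_pair.1 (hPv.1.2.2.2.infix hinf2))
  have hinfc : [s(α, β), c1] <:+: P x y :=
    ⟨pre0 ++ [gA], B', by rw [hdecL]; simp⟩
  have hc1at : WBW.Attached R s(α, β) c1 :=
    List.isChain_pair.1 (hPv.1.2.2.2.infix hinfc)
  have hinf3 : [gA, s(α, β), c1] <:+: P x y := ⟨pre0, B', by rw [hdecL]; simp⟩
  have hnd3 : [gA, s(α, β), c1].Nodup := hinf3.sublist.nodup hPv.1.2.1
  have hgAne : gA ≠ s(α, β) := by simp at hnd3; tauto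
  have hc1ne : c1 ≠ s(α, β) := by
    simp at hnd3
    intro hcon
    exact hnd3.2 hcon.symm
  have hgAc1 : gA ≠ c1 := by simp at hnd3; tauto
  have hskip : ¬ WBW.Attached R gA c1 := not_attached_skip hPv hm hdecL
  rcases attached_to_edge htri hαβ hc1at hc1ne with hc1f | hc1f
  · exact ⟨(x, y, pre0, gA, c1, B'), rfl, hadj, hnadj, hdecL, hc1f⟩
  · rcases attached_to_edge htri hαβ hgAat hgAne with hgAf | hgAf
    · refine ⟨(y, x, B'.reverse, c1, gA, pre0.reverse), Sym2.eq_swap,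
        hadj.symm, fun h => hnadj h.symm, ?_, hgAf⟩
      show P y x = B'.reverse ++ c1 :: s(α, β) :: gA :: pre0.reverse
      rw [hPsymm x y, hdecL]
      simp
    · exfalso
      have T1' : Tri R β α (apx R β α) := tri_apx htri hαβ.symm
      have hpair := tri_attached_23 T1'
      rcases hgAf with hg | hg <;> rcases hc1f with hc | hc
      · exact hgAc1 (hg.trans hc.symm)
      · exact hskip (by rw [hg, hc]; exact hpair)
      · exact hskip (by rw [hg, hc]; exact attached_symm hpair)
      · exact hgAc1 (hg.trans hc.symm)

end WBWAux

/-- from the proof of Lemma 3: in the drawing of `H_Δ^λ` in which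
every new edge `{x,y}` is drawn along a chosen shortest `(x,y)`-wbw-path, crossing
exactly the interior edges `e₂, …, e_{ℓ-1}` of that path, every old edge is crossed
by at most `(λ−3)·2^{λ−2} + 1` new edges. -/
theorem old_edge_crossing_bound (V : Type) [Finite V] (R : WBW.RotationSystem V)
    (hplane : R.IsPlane) (h3 : WBW.ThreeConnected R.G) (htri : R.Triangulated)
    (l : ℕ) (hl : 0 < l) (P : V → V → List (Sym2 V))
    (hP : ∀ x y, (R.power l).Adj x y → ¬ R.G.Adj x y →
      WBW.IsWbwWalkFromTo R x y (P x y) ∧ ((P x y).length : ℕ∞) = WBW.wbwDist R x y)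
    (hPsymm : ∀ x y, P y x = (P x y).reverse)
    (e : Sym2 V) (he : e ∈ R.G.edgeSet) :
    Set.ncard {q : Sym2 V | q ∈ (R.power l).edgeSet ∧ q ∉ R.G.edgeSet ∧
        ∃ x y, q = s(x, y) ∧ e ∈ ((P x y).drop 1).dropLast} ≤
      (l - 3) * 2 ^ (l - 2) + 1 := by
  classical
  revert he
  induction e using Sym2.ind with
  | _ α β =>
  intro he
  have hαβ : R.G.Adj α β := (SimpleGraph.mem_edgeSet R.G).1 he
  have hcard : {q : Sym2 V | q ∈ (R.power l).edgeSet ∧ q ∉ R.G.edgeSet ∧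
      ∃ x y, q = s(x, y) ∧ s(α, β) ∈ ((P x y).drop 1).dropLast}.ncard
      ≤ (WBWAux.TT (l - 3)).card := by
    rw [← Set.ncard_coe_finset]
    refine Set.ncard_le_ncard_of_injOn (WBWAux.fenc R P l α β) ?_ ?_ ?_
    · rintro q ⟨hq1, hq2, hq3⟩
      have hexq := WBWAux.good_exists htri hP hPsymm hαβ hq1 hq2 hq3
      obtain ⟨_, _, hlen⟩ :=
        WBWAux.good_recover htri h3 hP hPsymm hαβ hexq.choose_spec
      simp only [WBWAux.fenc, dif_pos hexq]
      simp only [Finset.mem_coe]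
      rw [WBWAux.mem_TT]
      simp only [List.length_dropLast, WBWAux.code_length, List.length_cons,
        List.length_reverse]
      omega
    · rintro q ⟨hq1, hq2, hq3⟩ q' ⟨hq1', hq2', hq3'⟩ hfq
      have hexq := WBWAux.good_exists htri hP hPsymm hαβ hq1 hq2 hq3
      have hexq' := WBWAux.good_exists htri hP hPsymm hαβ hq1' hq2' hq3'
      have hG := hexq.choose_spec
      have hG' := hexq'.choose_spec
      obtain ⟨hx, hy, _⟩ := WBWAux.good_recover htri h3 hP hPsymm hαβ hG
      obtain ⟨hx', hy', _⟩ := WBWAux.good_recover htri h3 hP hPsymm hαβ hG'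
      simp only [WBWAux.fenc, dif_pos hexq, dif_pos hexq'] at hfq
      have e1 : hexq.choose.1 = hexq'.choose.1 := by
        rw [hx, hx']
        exact congrArg (fun z : List Bool × List Bool => WBWAux.ydec R (β, α) z.1) hfq
      have e2 : hexq.choose.2.1 = hexq'.choose.2.1 := by
        rw [hy, hy']
        exact congrArg (fun z : List Bool × List Bool => WBWAux.ydec R (α, β) z.2) hfq
      rw [hG.1, hG'.1, e1, e2]
    · exact (WBWAux.TT (l - 3)).finite_toSet
  refine hcard.trans ?_
  rw [WBWAux.card_TT]
  rcases Nat.lt_or_ge l 3 with hl3 | hl3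
  · have h0 : l - 3 = 0 := by omega
    rw [h0]; simp
  · have h1 : l - 3 + 1 = l - 2 := by omega
    rw [h1]
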